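/- For every n ≥ 1, the maximum number of entries equal to −1 over all n×n alternating sign matrices equals ⌊(n−1)/2⌋·⌈(n−1)/2⌉, and the maximum number of entries equal to −1 over all n×n magog matrices also equals ⌊(n−1)/2⌋·⌈(n−1)/2⌉. -/

import Mathlib

/-- An `n × n` square sign matrix: a `{0, 1, -1}`-matrix whose rows and columns
all sum to 1, whose partial column sums lie in `{0, 1}`, and whose partial row
sums are nonnegative. -/
def IsSquareSign (n : ℕ) (A : Fin n → Fin n → ℤ) : Prop :=
  (∀ i j, A i j = -1 ∨ A i j = 0 ∨ A i j = 1) ∧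
  (∀ j, ∑ i, A i j = 1) ∧
  (∀ i, ∑ j, A i j = 1) ∧
  (∀ i j : Fin n, 0 ≤ ∑ i' ∈ Finset.Iic i, A i' j ∧ ∑ i' ∈ Finset.Iic i, A i' j ≤ 1) ∧
  (∀ i j : Fin n, 0 ≤ ∑ j' ∈ Finset.Iic j, A i j')

/-- An `n × n` magog matrix: a square sign matrix satisfying the
`(i,j)`-special inequalities (stated here with 0-based indices `i, j`,
corresponding to the paper's 1-based `i+1, j+1` with `1 ≤ i, j ≤ n-2`). -/
def IsMagog (n : ℕ) (A : Fin n → Fin n → ℤ) : Prop :=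
  IsSquareSign n A ∧
  ∀ (i j : ℕ) (hi : i + 2 < n) (hj : j + 2 < n),
    0 ≤ (∑ j' ∈ Finset.Iic (⟨j, by omega⟩ : Fin n), A ⟨i + 1, by omega⟩ j')
      + (∑ i' ∈ Finset.Iic (⟨i + 1, by omega⟩ : Fin n), A i' ⟨j + 1, by omega⟩)
      - (∑ i' ∈ Finset.Iic (⟨i, by omega⟩ : Fin n), A i' ⟨j, by omega⟩)

/-- An `n × n` alternating sign matrix: a square sign matrix whose partial row
sums are also at most `1`. -/
def IsASM (n : ℕ) (A : Fin n → Fin n → ℤ) : Prop :=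
  IsSquareSign n A ∧ ∀ i j : Fin n, ∑ j' ∈ Finset.Iic j, A i j' ≤ 1

/-- The number of entries of `A` equal to `-1`. -/
def negCount (n : ℕ) (A : Fin n → Fin n → ℤ) : ℕ :=
  (Finset.univ.filter (fun p : Fin n × Fin n => A p.1 p.2 = -1)).card



/-- Support of the diamond matrix (with parameters `m1 = (n-1)/2`, `m2 = n/2`). -/
def Dsupp (n m1 m2 i j : ℕ) : Prop :=
  m1 ≤ i + j ∧ i ≤ m1 + j ∧ m2 + j ≤ i + (n - 1) ∧ i + j ≤ m2 + (n - 1)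

instance (n m1 m2 i j : ℕ) : Decidable (Dsupp n m1 m2 i j) := by unfold Dsupp; infer_instance

/-- The diamond matrix. -/
def Dmat (n m1 m2 i j : ℕ) : ℤ :=
  if Dsupp n m1 m2 i j then (if 2 ∣ (i + j + m1) then 1 else -1) else 0

/-- Closed form for partial row sums of `Dmat`. -/
def Rval (n m1 m2 i j : ℕ) : ℤ :=
  if (m1 ≤ i + j ∧ i ≤ m1 + j) ∧
     (2 ∣ (i + j + m1) ∨ (n-1) + m2 ≤ i + j ∨ (n-1) + i ≤ m2 + j) then 1 else 0

lemma Dmat_symm (n m1 m2 : ℕ) (hm : m1 + m2 + 1 = n) (hm12 : m1 ≤ m2 ∧ m2 ≤ m1 + 1)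
    (i j : ℕ) : Dmat n m1 m2 i j = Dmat n m1 m2 j i := by
  have h1 : Dsupp n m1 m2 i j ↔ Dsupp n m1 m2 j i := by unfold Dsupp; omega
  have h2 : (2 ∣ (i + j + m1)) ↔ (2 ∣ (j + i + m1)) := by omega
  unfold Dmat
  rw [if_congr h1 (if_congr h2 rfl rfl) rfl]

lemma Rfun_eq_Rval (n m1 m2 : ℕ) (hm : m1 + m2 + 1 = n)
    (hm12 : m1 ≤ m2 ∧ m2 ≤ m1 + 1) (i : ℕ) (hi : i < n) :
    ∀ j, j < n → (∑ j' ∈ Finset.range (j+1), Dmat n m1 m2 i j') = Rval n m1 m2 i j := by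
  intro j
  induction j with
  | zero =>
    intro _
    rw [Finset.sum_range_one]
    simp only [Dmat, Dsupp, Rval]
    split_ifs <;> omega
  | succ j ih =>
    intro hj
    rw [Finset.sum_range_succ, ih (by omega)]
    simp only [Dmat, Dsupp, Rval]
    split_ifs <;> omega

lemma Rval_last (n m1 m2 : ℕ) (hm : m1 + m2 + 1 = n) (hm12 : m1 ≤ m2 ∧ m2 ≤ m1 + 1)
    (i : ℕ) (hi : i < n) : Rval n m1 m2 i (n-1) = 1 := by
  unfold Rval
  split_ifs <;> omega

lemma Rval_mem (n m1 m2 i j : ℕ) : Rval n m1 m2 i j = 0 ∨ Rval n m1 m2 i j = 1 := by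
  unfold Rval; split_ifs <;> simp

/-- Closed form for the count of `-1` entries in a partial row. -/
def Nval (n m1 m2 i j : ℕ) : ℕ :=
  (min j ((n-1) - (max (i - m2) (m2 - i))) + 1 - (max (i - m1) (m1 - i))) / 2

lemma negInd (n m1 m2 i j : ℕ) :
    (if Dmat n m1 m2 i j = -1 then (1:ℕ) else 0)
      = (if Dsupp n m1 m2 i j ∧ ¬ (2 ∣ (i + j + m1)) then 1 else 0) := by
  unfold Dmat
  by_cases h1 : Dsupp n m1 m2 i j <;> by_cases h2 : 2 ∣ (i + j + m1) <;>
    simp [h1, h2]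

set_option maxHeartbeats 1000000 in
lemma Nfun_eq_Nval (n m1 m2 : ℕ) (hm : m1 + m2 + 1 = n)
    (hm12 : m1 ≤ m2 ∧ m2 ≤ m1 + 1) (i : ℕ) (hi : i < n) :
    ∀ j, j < n →
      (∑ j' ∈ Finset.range (j+1), (if Dmat n m1 m2 i j' = -1 then (1:ℕ) else 0))
        = Nval n m1 m2 i j := by
  intro j
  induction j with
  | zero =>
    intro _
    rw [Finset.sum_range_one, negInd]
    split_ifs with hc <;> simp only [Dsupp, Nval] at hc ⊢ <;> omega
  | succ j ih =>
    intro hj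
    rw [Finset.sum_range_succ, ih (by omega), negInd]
    split_ifs with hc <;> simp only [Dsupp, Nval] at hc ⊢ <;> omega

lemma Nval_last (n m1 m2 : ℕ) (hm : m1 + m2 + 1 = n) (hm12 : m1 ≤ m2 ∧ m2 ≤ m1 + 1)
    (i : ℕ) (hi : i < n) : Nval n m1 m2 i (n-1) = min i (n-1-i) := by
  unfold Nval; omega

/-- The magog special inequality at the level of closed forms. -/
lemma Rval_magog (n m1 m2 : ℕ) (hm : m1 + m2 + 1 = n) (hm12 : m1 ≤ m2 ∧ m2 ≤ m1 + 1)
    (i j : ℕ) (hi : i + 2 < n) (hj : j + 2 < n) :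
    0 ≤ Rval n m1 m2 (i+1) j + Rval n m1 m2 (j+1) (i+1) - Rval n m1 m2 j i := by
  unfold Rval
  split_ifs <;> omega


lemma halfCount (n : ℕ) :
    (∑ i ∈ Finset.range n, (if n ≤ 2*i then (1:ℕ) else 0)) = n/2 := by
  rw [Finset.sum_boole]
  have h : (Finset.range n).filter (fun i => n ≤ 2*i) = Finset.Ico ((n+1)/2) n := by
    ext x
    simp only [Finset.mem_filter, Finset.mem_range, Finset.mem_Ico]
    omega
  rw [h, Nat.card_Ico]; simp only [Nat.cast_id]
  omega

lemma Tsum : ∀ n : ℕ, (∑ i ∈ Finset.range n, min i (n-1-i)) = (n-1)/2 * (n/2) := by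
  intro n
  induction n with
  | zero => rfl
  | succ n ih =>
    rw [Finset.sum_range_succ]
    have h1 : ∀ i ∈ Finset.range n, min i (n+1-1-i) = min i (n-1-i) + (if n ≤ 2*i then 1 else 0) := by
      intro i hi
      simp only [Finset.mem_range] at hi
      split_ifs <;> omega
    rw [Finset.sum_congr rfl h1, Finset.sum_add_distrib, ih, halfCount]
    have h2 : min n (n+1-1-n) = 0 := by omega
    rw [h2]
    -- goal: (n-1)/2 * (n/2) + n/2 + 0 = (n+1-1)/2 * ((n+1)/2)
    rcases Nat.even_or_odd n with ⟨m, hm⟩ | ⟨m, hm⟩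
    · subst hm
      rcases Nat.eq_zero_or_pos m with rfl | hmpos
      · simp
      · have e1 : (m + m - 1)/2 = m - 1 := by omega
        have e2 : (m + m)/2 = m := by omega
        have e3 : (m + m + 1 - 1)/2 = m := by omega
        have e4 : (m + m + 1)/2 = m := by omega
        rw [e1, e2, e3, e4]
        cases m with
        | zero => omega
        | succ k => simp [Nat.succ_sub_one]; ring
    · subst hm
      have e1 : (2*m + 1 - 1)/2 = m := by omega
      have e2 : (2*m + 1)/2 = m := by omega
      have e3 : (2*m + 1 + 1 - 1)/2 = m := by omega
      have e4 : (2*m + 1 + 1)/2 = m + 1 := by omega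
      rw [e1, e2, e3, e4]
      ring
lemma sum_Iic_fin {M : Type*} [AddCommMonoid M] {n : ℕ} (i : Fin n) (g : ℕ → M) :
    ∑ x ∈ Finset.Iic i, g x.val = ∑ k ∈ Finset.range (i.val+1), g k := by
  calc ∑ x ∈ Finset.Iic i, g x.val
      = ∑ k ∈ (Finset.Iic i).map Fin.valEmbedding, g k := by rw [Finset.sum_map]; rfl
    _ = ∑ k ∈ Finset.Iic i.val, g k := by rw [Fin.map_valEmbedding_Iic]
    _ = ∑ k ∈ Finset.range (i.val+1), g k := by
        congr 1; ext x; simp [Nat.lt_succ_iff]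

lemma negCount_le_of_squareSign (n : ℕ) (hn : 0 < n) (A : Fin n → Fin n → ℤ)
    (h : IsSquareSign n A) : negCount n A ≤ (n-1)/2 * (n/2) := by
  obtain ⟨h1, h2, h3, h4, h5⟩ := h
  set B : ℕ → ℕ → ℤ := fun i j => if h : i < n ∧ j < n then A ⟨i, h.1⟩ ⟨j, h.2⟩ else 0 with hB
  set C : ℕ → ℕ → ℤ := fun i j => ∑ i' ∈ Finset.range (i+1), B i' j with hC
  have hBA : ∀ (i j : Fin n), B i.val j.val = A i j := by
    intro i j; simp [hB, i.isLt, j.isLt]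
  have hCIic : ∀ (i j : Fin n), C i.val j.val = ∑ i' ∈ Finset.Iic i, A i' j := by
    intro i j
    show (∑ i' ∈ Finset.range (i.val+1), B i' j.val) = _
    rw [← sum_Iic_fin i (fun k => B k j.val)]
    exact Finset.sum_congr rfl (fun x _ => hBA x j)
  have hC01 : ∀ i j, i < n → j < n → C i j = 0 ∨ C i j = 1 := by
    intro i j hi hj
    have h4' := h4 ⟨i, hi⟩ ⟨j, hj⟩
    have e : C i j = ∑ i' ∈ Finset.Iic (⟨i, hi⟩ : Fin n), A i' ⟨j, hj⟩ := hCIic ⟨i, hi⟩ ⟨j, hj⟩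
    omega
  have hrow : ∀ i, i < n → ∑ j ∈ Finset.range n, B i j = 1 := by
    intro i hi
    rw [← Fin.sum_univ_eq_sum_range (fun k => B i k) n]
    calc ∑ j : Fin n, B i j.val = ∑ j : Fin n, A ⟨i, hi⟩ j :=
          Finset.sum_congr rfl (fun j _ => hBA ⟨i, hi⟩ j)
      _ = 1 := h3 ⟨i, hi⟩
  have hCsum : ∀ i, i < n → ∑ j ∈ Finset.range n, C i j = (i : ℤ) + 1 := by
    intro i hi
    simp only [hC]
    rw [Finset.sum_comm]
    rw [Finset.sum_congr rfl (fun i' hi' => hrow i' (by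
      simp only [Finset.mem_range] at hi'; omega))]
    simp
  have hfilter1 : ∀ i, i < n →
      ((((Finset.range n).filter (fun j => C i j = 1)).card : ℤ)) = (i : ℤ) + 1 := by
    intro i hi
    rw [← Finset.sum_boole]
    rw [← hCsum i hi]
    refine Finset.sum_congr rfl (fun j hj => ?_)
    simp only [Finset.mem_range] at hj
    rcases hC01 i j hi hj with h | h <;> simp [h]
  set cnt : ℕ → ℕ := fun i => ((Finset.range n).filter (fun j => B i j = -1)).card with hcntdef
  have hcnt : ∀ i, i < n → cnt i ≤ min i (n-1-i) := by
    intro i hi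
    match i with
    | 0 =>
      have : ((Finset.range n).filter (fun j => B 0 j = -1)) = ∅ := by
        rw [Finset.filter_eq_empty_iff]
        intro j hj
        simp only [Finset.mem_range] at hj
        have hc := hC01 0 j hn hj
        have e : C 0 j = B 0 j := by
          show (∑ i' ∈ Finset.range (0+1), B i' j) = B 0 j
          rw [Finset.sum_range_one]
        intro hBj
        omega
      simp [hcntdef, this]
    | (k+1) =>
      have hCstep : ∀ j, C (k+1) j = C k j + B (k+1) j := by
        intro j
        show (∑ i' ∈ Finset.range (k+1+1), B i' j) = _
        rw [Finset.sum_range_succ]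
      have sub1 : ((Finset.range n).filter (fun j => B (k+1) j = -1))
          ⊆ ((Finset.range n).filter (fun j => C k j = 1)) := by
        intro j hj
        simp only [Finset.mem_filter, Finset.mem_range] at hj ⊢
        refine ⟨hj.1, ?_⟩
        have e := hCstep j
        have c1 := hC01 (k+1) j hi hj.1
        have c2 := hC01 k j (by omega) hj.1
        omega
      have sub2 : ((Finset.range n).filter (fun j => B (k+1) j = -1))
          ⊆ ((Finset.range n).filter (fun j => C (k+1) j = 0)) := by
        intro j hj
        simp only [Finset.mem_filter, Finset.mem_range] at hj ⊢
        refine ⟨hj.1, ?_⟩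
        have e := hCstep j
        have c1 := hC01 (k+1) j hi hj.1
        have c2 := hC01 k j (by omega) hj.1
        omega
      have b1 : cnt (k+1) ≤ k + 1 := by
        have := Finset.card_le_card sub1
        have h1 := hfilter1 k (by omega)
        simp only [hcntdef]
        omega
      have b2 : cnt (k+1) ≤ n - 1 - (k+1) := by
        have hdisj : Disjoint ((Finset.range n).filter (fun j => C (k+1) j = 0))
            ((Finset.range n).filter (fun j => C (k+1) j = 1)) := by
          rw [Finset.disjoint_filter]
          intro j _ hj0 hj1
          omega
        have hunion := Finset.card_union_of_disjoint hdisj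
        have hsub : ((Finset.range n).filter (fun j => C (k+1) j = 0))
            ∪ ((Finset.range n).filter (fun j => C (k+1) j = 1)) ⊆ Finset.range n := by
          intro x hx
          simp only [Finset.mem_union, Finset.mem_filter] at hx
          tauto
        have hcard := Finset.card_le_card hsub
        have h1 := hfilter1 (k+1) hi
        have := Finset.card_le_card sub2
        simp only [hcntdef]
        rw [Finset.card_range] at hcard
        omega
      omega
  have hdecomp : negCount n A = ∑ i ∈ Finset.range n, cnt i := by
    rw [negCount, Finset.card_filter, Fintype.sum_prod_type]
    rw [← Fin.sum_univ_eq_sum_range (fun k => cnt k) n]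
    refine Finset.sum_congr rfl (fun i _ => ?_)
    simp only [hcntdef]
    rw [Finset.card_filter, ← Fin.sum_univ_eq_sum_range (fun k => if B i.val k = -1 then 1 else 0) n]
    refine Finset.sum_congr rfl (fun j _ => ?_)
    rw [hBA i j]
  rw [hdecomp, ← Tsum n]
  exact Finset.sum_le_sum (fun i hi => hcnt i (Finset.mem_range.mp hi))

lemma witness_all (n : ℕ) (hn : 0 < n) :
    ∃ A : Fin n → Fin n → ℤ, IsASM n A ∧ IsMagog n A ∧ negCount n A = (n-1)/2 * (n/2) := by
  set m1 := (n-1)/2 with hm1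
  set m2 := n/2 with hm2
  have hm : m1 + m2 + 1 = n := by omega
  have hm12 : m1 ≤ m2 ∧ m2 ≤ m1 + 1 := by omega
  refine ⟨fun i j => Dmat n m1 m2 i.val j.val, ?_⟩
  have hRow : ∀ i j : Fin n, (∑ j' ∈ Finset.Iic j, Dmat n m1 m2 i.val j'.val)
      = Rval n m1 m2 i.val j.val := by
    intro i j
    rw [sum_Iic_fin j (fun k => Dmat n m1 m2 i.val k)]
    exact Rfun_eq_Rval n m1 m2 hm hm12 i.val i.isLt j.val j.isLt
  have hCol : ∀ i j : Fin n, (∑ i' ∈ Finset.Iic i, Dmat n m1 m2 i'.val j.val)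
      = Rval n m1 m2 j.val i.val := by
    intro i j
    rw [sum_Iic_fin i (fun k => Dmat n m1 m2 k j.val)]
    rw [Finset.sum_congr rfl (fun k _ => Dmat_symm n m1 m2 hm hm12 k j.val)]
    exact Rfun_eq_Rval n m1 m2 hm hm12 j.val j.isLt i.val i.isLt
  have hRowTot : ∀ i : Fin n, (∑ j : Fin n, Dmat n m1 m2 i.val j.val) = 1 := by
    intro i
    rw [Fin.sum_univ_eq_sum_range (fun k => Dmat n m1 m2 i.val k) n]
    have h := Rfun_eq_Rval n m1 m2 hm hm12 i.val i.isLt (n-1) (by omega)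
    have e : n - 1 + 1 = n := by omega
    rw [e] at h
    rw [h]
    exact Rval_last n m1 m2 hm hm12 i.val i.isLt
  have hColTot : ∀ j : Fin n, (∑ i : Fin n, Dmat n m1 m2 i.val j.val) = 1 := by
    intro j
    rw [Fin.sum_univ_eq_sum_range (fun k => Dmat n m1 m2 k j.val) n]
    rw [Finset.sum_congr rfl (fun k _ => Dmat_symm n m1 m2 hm hm12 k j.val)]
    have h := Rfun_eq_Rval n m1 m2 hm hm12 j.val j.isLt (n-1) (by omega)
    have e : n - 1 + 1 = n := by omega
    rw [e] at h
    rw [h]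
    exact Rval_last n m1 m2 hm hm12 j.val j.isLt
  have hSS : IsSquareSign n (fun i j => Dmat n m1 m2 i.val j.val) := by
    refine ⟨?_, hColTot, hRowTot, ?_, ?_⟩
    · intro i j
      simp only [Dmat]
      split_ifs <;> simp
    · intro i j
      rw [hCol i j]
      rcases Rval_mem n m1 m2 j.val i.val with h | h <;> rw [h] <;> norm_num
    · intro i j
      rw [hRow i j]
      rcases Rval_mem n m1 m2 i.val j.val with h | h <;> rw [h] <;> norm_num
  refine ⟨⟨hSS, ?_⟩, ⟨hSS, ?_⟩, ?_⟩
  · intro i j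
    rw [hRow i j]
    rcases Rval_mem n m1 m2 i.val j.val with h | h <;> rw [h] <;> norm_num
  · intro i j hi hj
    have e1 : (∑ j' ∈ Finset.Iic (⟨j, by omega⟩ : Fin n),
        Dmat n m1 m2 (⟨i+1, by omega⟩ : Fin n).val j'.val) = Rval n m1 m2 (i+1) j :=
      hRow ⟨i+1, by omega⟩ ⟨j, by omega⟩
    have e2 : (∑ i' ∈ Finset.Iic (⟨i+1, by omega⟩ : Fin n),
        Dmat n m1 m2 i'.val (⟨j+1, by omega⟩ : Fin n).val) = Rval n m1 m2 (j+1) (i+1) :=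
      hCol ⟨i+1, by omega⟩ ⟨j+1, by omega⟩
    have e3 : (∑ i' ∈ Finset.Iic (⟨i, by omega⟩ : Fin n),
        Dmat n m1 m2 i'.val (⟨j, by omega⟩ : Fin n).val) = Rval n m1 m2 j i :=
      hCol ⟨i, by omega⟩ ⟨j, by omega⟩
    rw [e1, e2, e3]
    exact Rval_magog n m1 m2 hm hm12 i j hi hj
  · rw [negCount, Finset.card_filter, Fintype.sum_prod_type]
    have inner : ∀ i : Fin n,
        (∑ j : Fin n, if Dmat n m1 m2 i.val j.val = -1 then 1 else 0)
          = min i.val (n-1-i.val) := by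
      intro i
      rw [Fin.sum_univ_eq_sum_range (fun k => if Dmat n m1 m2 i.val k = -1 then 1 else 0) n]
      have h := Nfun_eq_Nval n m1 m2 hm hm12 i.val i.isLt (n-1) (by omega)
      have e : n - 1 + 1 = n := by omega
      rw [e] at h
      rw [h]
      exact Nval_last n m1 m2 hm hm12 i.val i.isLt
    rw [Finset.sum_congr rfl (fun i _ => inner i)]
    rw [Fin.sum_univ_eq_sum_range (fun k => min k (n-1-k)) n]
    exact Tsum n

/-- The maximum number of `-1` entries over all `n × n` ASMs, and over all
`n × n` magog matrices, both equal `⌊(n-1)/2⌋ * ⌈(n-1)/2⌉`. -/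
theorem max_negOnes_ASM_and_magog (n : ℕ) (hn : 0 < n) :
    IsGreatest {k : ℕ | ∃ A : Fin n → Fin n → ℤ, IsASM n A ∧ negCount n A = k}
      ((n - 1) / 2 * (n / 2)) ∧
    IsGreatest {k : ℕ | ∃ A : Fin n → Fin n → ℤ, IsMagog n A ∧ negCount n A = k}
      ((n - 1) / 2 * (n / 2)) := by
  obtain ⟨A, hASM, hMagog, hcount⟩ := witness_all n hn
  constructor
  · constructor
    · exact ⟨A, hASM, hcount⟩
    · rintro k ⟨A', hA', rfl⟩
      exact negCount_le_of_squareSign n hn A' hA'.1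
  · constructor
    · exact ⟨A, hMagog, hcount⟩
    · rintro k ⟨A', hA', rfl⟩
      exact negCount_le_of_squareSign n hn A' hA'.1
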